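/- Let E be a standard Borel space, (F, 𝓕) a measurable space, T : E → F measurable and surjective, and K a transition kernel on E reversible with respect to a probability measure π. Then for every f ∈ L²_{T_*π}: ∫_{F×F} (f(y) − f(y'))² ν_{T_*K}(dy dy') = ∫_{E×E} (f(T(x)) − f(T(x')))² ν_K(dx dx'). Consequently, if (X_k) is a Markov chain with transition kernel K and initial distribution π, and (Y_k) is a Markov chain with transition kernel T_*K and initial distribution T_*π, then Corr(f∘T(X_k), f∘T(X_{k+1})) = Corr(f(Y_k), f(Y_{k+1})). -/

import Mathlib

open MeasureTheory ProbabilityTheory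
open scoped ENNReal NNReal

/-- The pushforward transition kernel `T_*K(y, B) := E[K(X, T⁻¹(B)) | T(X) = y]`, `X ∼ π`,
realized via a regular conditional distribution `condDistrib id T π` of `X` given `T(X)`. -/
noncomputable def pushKernel {E F : Type*} [MeasurableSpace E] [StandardBorelSpace E] [Nonempty E]
    [MeasurableSpace F] (T : E → F) (π : Measure E) [IsFiniteMeasure π] (K : Kernel E E) :
    Kernel F F :=
  Kernel.map (K ∘ₖ condDistrib id T π) T

/-- A transition kernel `K` is reversible w.r.t. `π` if the measure `ν_K(dx dx') := K(x, dx') π(dx)`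
on `E × E` is invariant under the coordinate swap `(x, x') ↦ (x', x)`. -/
def IsReversible {E : Type*} [MeasurableSpace E] (π : Measure E) (K : Kernel E E) : Prop :=
  (π ⊗ₘ K).map Prod.swap = π ⊗ₘ K

/-- Correlation of two real random variables on a probability space. -/
noncomputable def corr {Ω : Type*} [MeasurableSpace Ω] (Pr : Measure Ω) (g h : Ω → ℝ) : ℝ :=
  ((∫ ω, g ω * h ω ∂Pr) - (∫ ω, g ω ∂Pr) * (∫ ω, h ω ∂Pr)) /
    (Real.sqrt (variance g Pr) * Real.sqrt (variance h Pr))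

lemma aux_meas_pushg {E F : Type*} [MeasurableSpace E] [MeasurableSpace F]
    (T : E → F) (hT : Measurable T) (K : Kernel E E) [IsMarkovKernel K]
    {s : Set (F × F)} (hs : MeasurableSet s) :
    Measurable fun p : F × E => (K.map T) p.2 (Prod.mk p.1 ⁻¹' s) := by
  haveI : IsMarkovKernel (K.map T) := Kernel.IsMarkovKernel.map K hT
  have hsnd : Measurable (Prod.snd : F × E → E) := measurable_snd
  let κ' : Kernel (F × E) F := (K.map T).comap Prod.snd hsnd
  have hs' : MeasurableSet ((fun q : (F × E) × F => (q.1.1, q.2)) ⁻¹' s) :=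
    (measurable_fst.fst.prodMk measurable_snd) hs
  have h : Measurable fun p : F × E => κ' p (Prod.mk p ⁻¹' ((fun q : (F × E) × F => (q.1.1, q.2)) ⁻¹' s)) :=
    Kernel.measurable_kernel_prodMk_left hs'
  have heq : (fun p : F × E => (K.map T) p.2 (Prod.mk p.1 ⁻¹' s))
      = fun p : F × E => κ' p (Prod.mk p ⁻¹' ((fun q : (F × E) × F => (q.1.1, q.2)) ⁻¹' s)) := by
    funext p
    rfl
  rw [heq]
  exact h

lemma pushKernel_compProd_eq {E F : Type*} [MeasurableSpace E] [StandardBorelSpace E] [Nonempty E]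
    [MeasurableSpace F] (T : E → F) (hT : Measurable T)
    (π : Measure E) [IsProbabilityMeasure π] (K : Kernel E E) [IsMarkovKernel K] :
    (π.map T) ⊗ₘ pushKernel T π K = (π ⊗ₘ K).map (Prod.map T T) := by
  haveI : IsProbabilityMeasure (π.map T) := Measure.isProbabilityMeasure_map hT.aemeasurable
  haveI : IsMarkovKernel (pushKernel T π K) := by
    unfold pushKernel; exact Kernel.IsMarkovKernel.map _ hT
  set κ := condDistrib id T π with hκdef
  have hρ : (π.map T) ⊗ₘ κ = π.map (fun x => (T x, x)) := by
    haveI : IsProbabilityMeasure (π.map fun x => (T x, x)) :=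
      Measure.isProbabilityMeasure_map ((hT.prodMk measurable_id').aemeasurable)
    have h1 : κ = (π.map fun x => (T x, x)).condKernel := by
      rw [hκdef, condDistrib_def]
      simp only [id_eq]
    have h2 : (π.map fun x => (T x, x)).fst = π.map T := by
      unfold Measure.fst
      rw [Measure.map_map measurable_fst (hT.prodMk measurable_id')]
      rfl
    rw [h1, ← h2]
    exact (π.map fun x => (T x, x)).disintegrate _
  ext s hs
  have hmeasg : Measurable fun p : F × E => (K.map T) p.2 (Prod.mk p.1 ⁻¹' s) :=
    aux_meas_pushg T hT K hs
  rw [Measure.compProd_apply hs]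
  have h1 : ∀ y, pushKernel T π K y (Prod.mk y ⁻¹' s)
      = ∫⁻ x, (K.map T) x (Prod.mk y ⁻¹' s) ∂(κ y) := by
    intro y
    have hsy : MeasurableSet (Prod.mk y ⁻¹' s) := measurable_prodMk_left hs
    rw [show pushKernel T π K = Kernel.map (K ∘ₖ κ) T from rfl,
      Kernel.map_apply' _ hT _ hsy, Kernel.comp_apply' _ _ _ (hT hsy)]
    exact lintegral_congr fun x => (Kernel.map_apply' K hT x hsy).symm
  calc ∫⁻ y, pushKernel T π K y (Prod.mk y ⁻¹' s) ∂(π.map T)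
      = ∫⁻ y, ∫⁻ x, (K.map T) x (Prod.mk y ⁻¹' s) ∂(κ y) ∂(π.map T) := lintegral_congr h1
    _ = ∫⁻ p : F × E, (K.map T) p.2 (Prod.mk p.1 ⁻¹' s) ∂((π.map T) ⊗ₘ κ) :=
        (Measure.lintegral_compProd hmeasg).symm
    _ = ∫⁻ x, (K.map T) x (Prod.mk (T x) ⁻¹' s) ∂π := by
        rw [hρ, lintegral_map hmeasg (hT.prodMk measurable_id')]
    _ = ((π ⊗ₘ K).map (Prod.map T T)) s := by
        rw [Measure.map_apply (hT.prodMap hT) hs,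
          Measure.compProd_apply ((hT.prodMap hT) hs)]
        refine lintegral_congr fun x => ?_
        rw [Kernel.map_apply' K hT _ (measurable_prodMk_left hs)]
        rfl

lemma variance_map_comp {Ω α : Type*} [MeasurableSpace Ω] [MeasurableSpace α]
    (μ : Measure Ω) (g : Ω → α) (hg : AEMeasurable g μ) (u : α → ℝ)
    (hu : AEStronglyMeasurable u (μ.map g)) :
    variance (fun ω => u (g ω)) μ = variance u (μ.map g) := by
  have hint : ∫ a, u a ∂(μ.map g) = ∫ ω, u (g ω) ∂μ := integral_map hg hu
  have hev : evariance (fun ω => u (g ω)) μ = evariance u (μ.map g) := by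
    simp only [evariance, hint]
    exact (lintegral_map'
      ((((hu.aemeasurable.sub aemeasurable_const).nnnorm).coe_nnreal_ennreal).pow_const 2)
      hg).symm
  simp only [variance, hev]

lemma corr_aux {Ω α : Type*} [MeasurableSpace Ω] [MeasurableSpace α]
    (μ : Measure Ω) (g : Ω → α) (hg : AEMeasurable g μ) (u v : α → ℝ)
    (hu : AEStronglyMeasurable u (μ.map g)) (hv : AEStronglyMeasurable v (μ.map g))
    (huv : AEStronglyMeasurable (fun a => u a * v a) (μ.map g)) :
    (((∫ ω, u (g ω) * v (g ω) ∂μ) - (∫ ω, u (g ω) ∂μ) * (∫ ω, v (g ω) ∂μ)) /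
      (Real.sqrt (variance (fun ω => u (g ω)) μ) * Real.sqrt (variance (fun ω => v (g ω)) μ)))
    = (((∫ a, u a * v a ∂(μ.map g)) - (∫ a, u a ∂(μ.map g)) * (∫ a, v a ∂(μ.map g))) /
      (Real.sqrt (variance u (μ.map g)) * Real.sqrt (variance v (μ.map g)))) := by
  rw [integral_map hg hu, integral_map hg hv, integral_map hg huv,
    variance_map_comp μ g hg u hu, variance_map_comp μ g hg v hv]

/-- For `K` reversible w.r.t. `π` and every `f ∈ L²_{T_*π}`, the expected squared
jumps of `f` under the stationary transition measure of `T_*K` and of `f ∘ T` under that of `K`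
coincide.  Consequently, for a Markov chain `(X_k, X_{k+1})` in stationarity with kernel `K` and
initial distribution `π` (i.e. with joint law `π ⊗ₘ K`) and a Markov chain `(Y_k, Y_{k+1})` in
stationarity with kernel `T_*K` and initial distribution `T_*π`, the lag-one correlations of
`f ∘ T` along `(X_k)` and of `f` along `(Y_k)` coincide. -/
theorem jump_corr_pushforward
    {E F : Type*} [MeasurableSpace E] [StandardBorelSpace E] [Nonempty E] [MeasurableSpace F]
    (T : E → F) (hT : Measurable T) (hTsurj : Function.Surjective T)
    (π : Measure E) [IsProbabilityMeasure π] (K : Kernel E E) [IsMarkovKernel K]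
    (hrev : IsReversible π K)
    (f : F → ℝ) (hf : MemLp f 2 (π.map T)) :
    (∫ q, (f q.1 - f q.2) ^ 2 ∂((π.map T) ⊗ₘ pushKernel T π K)
        = ∫ p, (f (T p.1) - f (T p.2)) ^ 2 ∂(π ⊗ₘ K)) ∧
      (∀ {Ω Ω' : Type} [MeasurableSpace Ω] [MeasurableSpace Ω']
          (Pr : Measure Ω) (Qr : Measure Ω') [IsProbabilityMeasure Pr] [IsProbabilityMeasure Qr]
          (Xk Xk1 : Ω → E) (Yk Yk1 : Ω' → F),
        Pr.map (fun ω => (Xk ω, Xk1 ω)) = π ⊗ₘ K →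
        Qr.map (fun ω => (Yk ω, Yk1 ω)) = (π.map T) ⊗ₘ pushKernel T π K →
        corr Pr (fun ω => f (T (Xk ω))) (fun ω => f (T (Xk1 ω)))
          = corr Qr (fun ω => f (Yk ω)) (fun ω => f (Yk1 ω))) := by
  haveI : IsProbabilityMeasure (π.map T) := Measure.isProbabilityMeasure_map hT.aemeasurable
  haveI : IsMarkovKernel (pushKernel T π K) := by
    unfold pushKernel; exact Kernel.IsMarkovKernel.map _ hT
  have hA : (π.map T) ⊗ₘ pushKernel T π K = (π ⊗ₘ K).map (Prod.map T T) :=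
    pushKernel_compProd_eq T hT π K
  have hfae : AEStronglyMeasurable f (π.map T) := hf.aestronglyMeasurable
  -- marginals of π ⊗ₘ K
  have h1 : (π ⊗ₘ K).map Prod.fst = π := Measure.fst_compProd π K
  have h2 : (π ⊗ₘ K).map Prod.snd = π := by
    calc (π ⊗ₘ K).map Prod.snd = ((π ⊗ₘ K).map Prod.swap).map Prod.snd := by rw [hrev]
      _ = (π ⊗ₘ K).map (Prod.snd ∘ Prod.swap) := Measure.map_map measurable_snd measurable_swap
      _ = (π ⊗ₘ K).map Prod.fst := rfl
      _ = π := h1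
  have hm1 : (π ⊗ₘ K).map (fun p : E × E => T p.1) = π.map T := by
    rw [show (fun p : E × E => T p.1) = T ∘ Prod.fst from rfl,
      ← Measure.map_map hT measurable_fst, h1]
  have hm2 : (π ⊗ₘ K).map (fun p : E × E => T p.2) = π.map T := by
    rw [show (fun p : E × E => T p.2) = T ∘ Prod.snd from rfl,
      ← Measure.map_map hT measurable_snd, h2]
  -- marginals of (π.map T) ⊗ₘ pushKernel
  have hQ1 : ((π.map T) ⊗ₘ pushKernel T π K).map Prod.fst = π.map T :=
    Measure.fst_compProd (π.map T) (pushKernel T π K)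
  have hQ2 : ((π.map T) ⊗ₘ pushKernel T π K).map Prod.snd = π.map T := by
    rw [hA, Measure.map_map measurable_snd (hT.prodMap hT)]
    exact hm2
  -- a.e. strong measurability
  have hu1 : AEStronglyMeasurable (fun p : E × E => f (T p.1)) (π ⊗ₘ K) := by
    have h : AEStronglyMeasurable f ((π ⊗ₘ K).map (fun p : E × E => T p.1)) := by
      rw [hm1]; exact hfae
    exact h.comp_measurable (hT.comp measurable_fst)
  have hu2 : AEStronglyMeasurable (fun p : E × E => f (T p.2)) (π ⊗ₘ K) := by
    have h : AEStronglyMeasurable f ((π ⊗ₘ K).map (fun p : E × E => T p.2)) := by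
      rw [hm2]; exact hfae
    exact h.comp_measurable (hT.comp measurable_snd)
  have hv1 : AEStronglyMeasurable (fun q : F × F => f q.1) ((π.map T) ⊗ₘ pushKernel T π K) := by
    have h : AEStronglyMeasurable f (((π.map T) ⊗ₘ pushKernel T π K).map Prod.fst) := by
      rw [hQ1]; exact hfae
    exact h.comp_measurable measurable_fst
  have hv2 : AEStronglyMeasurable (fun q : F × F => f q.2) ((π.map T) ⊗ₘ pushKernel T π K) := by
    have h : AEStronglyMeasurable f (((π.map T) ⊗ₘ pushKernel T π K).map Prod.snd) := by
      rw [hQ2]; exact hfae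
    exact h.comp_measurable measurable_snd
  have hTT : AEMeasurable (Prod.map T T) (π ⊗ₘ K) := (hT.prodMap hT).aemeasurable
  constructor
  · -- squared jump identity
    have hsq : AEStronglyMeasurable (fun q : F × F => (f q.1 - f q.2) ^ 2)
        ((π.map T) ⊗ₘ pushKernel T π K) := by
      have h := (hv1.sub hv2).mul (hv1.sub hv2)
      simpa [pow_two, Pi.sub_def, Pi.mul_def] using h
    rw [hA] at hsq ⊢
    rw [integral_map hTT hsq]
    rfl
  · intro Ω Ω' _ _ Pr Qr _ _ Xk Xk1 Yk Yk1 hX hY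
    haveI : IsProbabilityMeasure (π ⊗ₘ K) := by
      constructor
      rw [Measure.compProd_apply_univ]
      exact measure_univ
    haveI : IsProbabilityMeasure ((π.map T) ⊗ₘ pushKernel T π K) := by
      constructor
      rw [Measure.compProd_apply_univ]
      exact measure_univ
    have hgX : AEMeasurable (fun ω => (Xk ω, Xk1 ω)) Pr := by
      by_contra h
      rw [Measure.map_of_not_aemeasurable h] at hX
      exact (IsProbabilityMeasure.ne_zero (π ⊗ₘ K)) hX.symm
    have hgY : AEMeasurable (fun ω => (Yk ω, Yk1 ω)) Qr := by
      by_contra h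
      rw [Measure.map_of_not_aemeasurable h] at hY
      exact (IsProbabilityMeasure.ne_zero ((π.map T) ⊗ₘ pushKernel T π K)) hY.symm
    have e1 : corr Pr (fun ω => f (T (Xk ω))) (fun ω => f (T (Xk1 ω)))
        = corr (π ⊗ₘ K) (fun p : E × E => f (T p.1)) (fun p : E × E => f (T p.2)) := by
      have h := corr_aux Pr (fun ω => (Xk ω, Xk1 ω)) hgX
        (fun p : E × E => f (T p.1)) (fun p : E × E => f (T p.2))
        (by rw [hX]; exact hu1) (by rw [hX]; exact hu2)
        (by rw [hX]; exact hu1.mul hu2)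
      rw [hX] at h
      simp only [corr]
      exact h
    have e2 : corr Qr (fun ω => f (Yk ω)) (fun ω => f (Yk1 ω))
        = corr ((π.map T) ⊗ₘ pushKernel T π K) (fun q : F × F => f q.1)
            (fun q : F × F => f q.2) := by
      have h := corr_aux Qr (fun ω => (Yk ω, Yk1 ω)) hgY
        (fun q : F × F => f q.1) (fun q : F × F => f q.2)
        (by rw [hY]; exact hv1) (by rw [hY]; exact hv2)
        (by rw [hY]; exact hv1.mul hv2)
      rw [hY] at h
      simp only [corr]
      exact h
    have e3 : corr (π ⊗ₘ K) (fun p : E × E => f (T p.1)) (fun p : E × E => f (T p.2))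
        = corr ((π.map T) ⊗ₘ pushKernel T π K) (fun q : F × F => f q.1)
            (fun q : F × F => f q.2) := by
      have h := corr_aux (π ⊗ₘ K) (Prod.map T T) hTT
        (fun q : F × F => f q.1) (fun q : F × F => f q.2)
        (hA ▸ hv1) (hA ▸ hv2) (hA ▸ (hv1.mul hv2))
      rw [← hA] at h
      simp only [corr]
      exact h
    exact e1.trans (e3.trans e2.symm)
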